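/- Every 2m×2m complex matrix is a sum of at most 5 skew-coninvolutory matrices. -/

import Mathlib

open Matrix ComplexConjugate

namespace SkewConAux


variable {m : ℕ}

/-- entrywise conjugation -/
noncomputable def mc {a b : Type*} (M : Matrix a b ℂ) : Matrix a b ℂ := M.map (starRingEnd ℂ)

@[simp] lemma mc_apply {a b : Type*} (M : Matrix a b ℂ) (i : a) (j : b) :
    mc M i j = conj (M i j) := rfl

lemma mc_mc {a b : Type*} (M : Matrix a b ℂ) : mc (mc M) = M := by
  ext i j; simp [mc]

lemma mc_add {a b : Type*} (M N : Matrix a b ℂ) : mc (M + N) = mc M + mc N := by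
  ext i j; simp [mc]

lemma mc_sub {a b : Type*} (M N : Matrix a b ℂ) : mc (M - N) = mc M - mc N := by
  ext i j; simp [mc]

lemma mc_neg {a b : Type*} (M : Matrix a b ℂ) : mc (-M) = -(mc M) := by
  ext i j; simp [mc]

lemma mc_smul {a b : Type*} (c : ℂ) (M : Matrix a b ℂ) : mc (c • M) = conj c • mc M := by
  ext i j; simp [mc]

lemma mc_zero {a b : Type*} : mc (0 : Matrix a b ℂ) = 0 := by
  ext i j; simp [mc]

lemma mc_one {n : Type*} [DecidableEq n] : mc (1 : Matrix n n ℂ) = 1 := by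
  unfold mc
  rw [Matrix.map_one _ (map_zero _) (map_one _)]

lemma mc_mul {n p q : Type*} [Fintype p] (M : Matrix n p ℂ) (N : Matrix p q ℂ) :
    mc (M * N) = mc M * mc N := Matrix.map_mul

lemma mc_fromBlocks (A : Matrix (Fin m) (Fin m) ℂ) (B : Matrix (Fin m) (Fin m) ℂ)
    (C : Matrix (Fin m) (Fin m) ℂ) (D : Matrix (Fin m) (Fin m) ℂ) :
    mc (fromBlocks A B C D) = fromBlocks (mc A) (mc B) (mc C) (mc D) :=
  Matrix.fromBlocks_map A B C D _

/-- the local abbreviation for the m×m matrix ring -/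
local notation "R" => Matrix (Fin m) (Fin m) ℂ
local notation "R2" => Matrix (Fin m ⊕ Fin m) (Fin m ⊕ Fin m) ℂ

/-- "upper" family of skew-coninvolutory matrices -/
noncomputable def upElt (X : R) (d : ℂ) : R2 :=
  fromBlocks ((d / conj d) • mc X) (d • 1) (-((conj d)⁻¹ • (1 + X * mc X))) (-X)

/-- "diagonal" family of skew-coninvolutory matrices -/
noncomputable def dgElt (G Gi : R) : R2 :=
  fromBlocks 0 (mc Gi) (-G) 0

lemma skew_upElt (X : R) (d : ℂ) (hd : d ≠ 0) :
    mc (upElt X d) * upElt X d = -1 := by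
  have hcd : conj d ≠ 0 := by simpa using hd
  unfold upElt
  rw [mc_fromBlocks, mc_smul, mc_mc, mc_smul, mc_one, mc_neg, mc_smul, mc_add, mc_one, mc_mul,
    mc_mc, mc_neg, fromBlocks_multiply]
  simp only [map_inv₀, Complex.conj_conj]
  have e11 : conj (d / conj d) • X * ((d / conj d) • mc X) +
      conj d • (1 : R) * -((conj d)⁻¹ • (1 + X * mc X)) = -1 := by
    have h1 : conj (d / conj d) * (d / conj d) = 1 := by
      rw [map_div₀]
      simp only [RingHomCompTriple.comp_apply, RingHom.id_apply, Complex.conj_conj]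
      field_simp
    have h2 : conj d * (conj d)⁻¹ = 1 := mul_inv_cancel₀ hcd
    rw [smul_mul_smul_comm, h1, one_smul, mul_neg, smul_mul_assoc, one_mul, smul_smul, h2,
      one_smul]
    abel
  have e12 : conj (d / conj d) • X * (d • (1 : R)) + conj d • (1 : R) * -X = 0 := by
    rw [smul_mul_smul_comm, mul_one, mul_neg, smul_mul_assoc, one_mul]
    have : conj (d / conj d) * d = conj d := by
      rw [map_div₀]
      simp only [Complex.conj_conj]
      field_simp
    rw [this]
    abel
  have e21 : -(d⁻¹ • (1 + mc X * X)) * ((d / conj d) • mc X) +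
      -(mc X) * -((conj d)⁻¹ • (1 + X * mc X)) = 0 := by
    rw [neg_mul, smul_mul_assoc, mul_smul_comm, smul_smul, neg_mul_neg, mul_smul_comm]
    have hc : d⁻¹ * (d / conj d) = (conj d)⁻¹ := by field_simp
    rw [hc]
    have : (1 + mc X * X) * mc X = mc X * (1 + X * mc X) := by noncomm_ring
    rw [this]
    abel
  have e22 : -(d⁻¹ • (1 + mc X * X)) * (d • (1 : R)) + -(mc X) * -X = -1 := by
    rw [neg_mul, smul_mul_smul_comm, inv_mul_cancel₀ hd, one_smul, mul_one, neg_mul_neg]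
    abel
  rw [e11, e12, e21, e22]
  ext (i|i) (j|j) <;> simp [Matrix.fromBlocks, Matrix.neg_apply, Matrix.one_apply]

lemma skew_dgElt (G Gi : R) (h1 : G * Gi = 1) (h2 : Gi * G = 1) :
    mc (dgElt G Gi) * dgElt G Gi = -1 := by
  unfold dgElt
  rw [mc_fromBlocks, mc_zero, mc_mc, mc_neg, fromBlocks_multiply]
  have e11 : (0 : R) * 0 + Gi * -G = -1 := by rw [mul_neg, h2]; simp
  have e22 : -(mc G) * mc Gi + 0 * 0 = -1 := by
    rw [neg_mul, ← mc_mul, h1, mc_one]; simp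
  rw [e11, e22]
  simp only [Matrix.mul_zero, Matrix.zero_mul, add_zero, zero_add]
  ext (i|i) (j|j) <;> simp [Matrix.fromBlocks, Matrix.neg_apply, Matrix.one_apply]



section Units
variable {A : Type*} [NormedRing A] [NormOneClass A] [CompleteSpace A]

/-- a perturbation of 1 of size ≤ 1/2 is a unit whose inverse has norm ≤ 2 -/
lemma unit_of_half (t : A) (h : ‖t‖ ≤ 1/2) :
    ∃ u : Aˣ, (u : A) = 1 - t ∧ ‖((u⁻¹ : Aˣ) : A)‖ ≤ 2 := by
  have h1 : ‖t‖ < 1 := lt_of_le_of_lt h (by norm_num)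
  refine ⟨Units.oneSub t h1, rfl, ?_⟩
  set v : A := (((Units.oneSub t h1)⁻¹ : Aˣ) : A)
  have hv : (1 - t) * v = 1 := (Units.oneSub t h1).mul_inv
  have hv' : v = 1 + t * v := by
    have h2 : v - t * v = 1 := by
      calc v - t * v = (1 - t) * v := by noncomm_ring
      _ = 1 := hv
    calc v = (v - t * v) + t * v := by abel
    _ = 1 + t * v := by rw [h2]
  have hnv : ‖v‖ ≤ 1 + ‖t‖ * ‖v‖ := by
    calc ‖v‖ = ‖1 + t * v‖ := by rw [← hv']
    _ ≤ ‖(1 : A)‖ + ‖t * v‖ := norm_add_le _ _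
    _ ≤ 1 + ‖t‖ * ‖v‖ := by rw [norm_one]; gcongr; exact norm_mul_le _ _
  nlinarith [norm_nonneg v, norm_nonneg t]

/-- key solvability lemma: the pair equations G + G' = S, G⁻¹ + G'⁻¹ = P -/
lemma exists_pair (S P : A) (PU : Aˣ) (hPU : (PU : A) = P)
    (NU : Aˣ) (hNU : (NU : A) = P * S - 2) (hsmall : ‖((NU⁻¹ : Aˣ) : A)‖ ≤ 1/3) :
    ∃ G G' : Aˣ, (G : A) + (G' : A) = S ∧ ((G⁻¹ : Aˣ) : A) + ((G'⁻¹ : Aˣ) : A) = P := by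
  -- fixed point Λ = (1 + Λ²) * NU⁻¹ on the ball of radius 1/2
  set q : A := ((NU⁻¹ : Aˣ) : A) with hq
  set B := Metric.closedBall (0 : A) (1/2)
  have hBc : IsClosed B := Metric.isClosed_closedBall
  haveI : CompleteSpace B := hBc.completeSpace_coe
  haveI : Nonempty B := ⟨⟨0, Metric.mem_closedBall_self (by norm_num)⟩⟩
  have memB : ∀ x : A, x ∈ B ↔ ‖x‖ ≤ 1/2 := by
    intro x; simp [B, Metric.mem_closedBall, dist_zero_right]
  have hself : ∀ x : B, (1 + (x : A)^2) * q ∈ B := by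
    intro x
    have hx : ‖(x : A)‖ ≤ 1/2 := (memB _).1 x.2
    rw [memB]
    calc ‖(1 + (x:A)^2) * q‖ ≤ ‖1 + (x:A)^2‖ * ‖q‖ := norm_mul_le _ _
    _ ≤ (‖(1:A)‖ + ‖(x:A)‖ * ‖(x:A)‖) * ‖q‖ := by
        gcongr
        refine le_trans (norm_add_le _ _) ?_
        gcongr
        rw [sq]; exact norm_mul_le _ _
    _ ≤ (1 + (1/2) * (1/2)) * (1/3) := by
        rw [norm_one]
        have h0 : (0:ℝ) ≤ ‖(x:A)‖ := norm_nonneg _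
        have h0q : (0:ℝ) ≤ ‖q‖ := norm_nonneg _
        nlinarith
    _ ≤ 1/2 := by norm_num
  set f : B → B := fun x => ⟨(1 + (x : A)^2) * q, hself x⟩ with hf_def
  have hlip : LipschitzWith (1/3 : NNReal) f := by
    apply LipschitzWith.of_dist_le_mul
    intro x y
    have hx : ‖(x : A)‖ ≤ 1/2 := (memB _).1 x.2
    have hy : ‖(y : A)‖ ≤ 1/2 := (memB _).1 y.2
    have hd1 : dist (f x) (f y) = ‖((x:A)^2 - (y:A)^2) * q‖ := by
      rw [Subtype.dist_eq, dist_eq_norm]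
      congr 1
      simp only [hf_def]
      noncomm_ring
    have hd2 : dist x y = ‖(x:A) - (y:A)‖ := by rw [Subtype.dist_eq, dist_eq_norm]
    rw [hd1, hd2]
    have hsplit : (x:A)^2 - (y:A)^2 = (x:A) * ((x:A) - (y:A)) + ((x:A) - (y:A)) * (y:A) := by
      noncomm_ring
    have hb : ‖(x:A)^2 - (y:A)^2‖ ≤ ‖(x:A) - (y:A)‖ := by
      rw [hsplit]
      calc ‖(x:A) * ((x:A) - (y:A)) + ((x:A) - (y:A)) * (y:A)‖
          ≤ ‖(x:A) * ((x:A) - (y:A))‖ + ‖((x:A) - (y:A)) * (y:A)‖ := norm_add_le _ _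
        _ ≤ ‖(x:A)‖ * ‖(x:A) - (y:A)‖ + ‖(x:A) - (y:A)‖ * ‖(y:A)‖ := by
            gcongr <;> exact norm_mul_le _ _
        _ ≤ ‖(x:A) - (y:A)‖ := by nlinarith [norm_nonneg ((x:A) - (y:A))]
    calc ‖((x:A)^2 - (y:A)^2) * q‖ ≤ ‖(x:A)^2 - (y:A)^2‖ * ‖q‖ := norm_mul_le _ _
      _ ≤ ‖(x:A) - (y:A)‖ * (1/3) := by
          apply mul_le_mul hb hsmall (norm_nonneg _) (norm_nonneg _)
      _ = ((1/3 : NNReal) : ℝ) * ‖(x:A) - (y:A)‖ := by push_cast; ring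
  have hcontr : ContractingWith (1/3 : NNReal) f := by
    refine ⟨?_, hlip⟩
    have : ((1:NNReal)/3) < 1 := by
      rw [div_lt_one] <;> norm_num
    exact this
  set Λfix := ContractingWith.fixedPoint f hcontr with hΛfix
  have hfx : f Λfix = Λfix := hcontr.fixedPoint_isFixedPt
  set Λ : A := (Λfix : A) with hΛdef
  have hΛnorm : ‖Λ‖ ≤ 1/2 := (memB _).1 Λfix.2
  have hΛ : (1 + Λ^2) * q = Λ := by
    have := congrArg (Subtype.val) hfx
    simpa [hf_def] using this
  -- units
  obtain ⟨u1, hu1v, _⟩ := unit_of_half (-(Λ^2)) (by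
    rw [norm_neg]
    calc ‖Λ^2‖ ≤ ‖Λ‖ * ‖Λ‖ := by rw [sq]; exact norm_mul_le _ _
    _ ≤ 1/2 := by nlinarith [norm_nonneg Λ])
  have hu1 : (u1 : A) = 1 + Λ^2 := by rw [hu1v, sub_neg_eq_add]
  obtain ⟨u2, hu2v, _⟩ := unit_of_half (-Λ) (by rwa [norm_neg])
  have hu2 : (u2 : A) = 1 + Λ := by rw [hu2v, sub_neg_eq_add]
  set ΛU : Aˣ := u1 * NU⁻¹ with hΛUdef
  have hΛU : (ΛU : A) = Λ := by
    rw [hΛUdef, Units.val_mul, hu1, ← hq, hΛ]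
  have keyN : Λ * (NU : A) = 1 + Λ^2 := by
    calc Λ * (NU : A) = (1 + Λ^2) * q * (NU : A) := by rw [hΛ]
    _ = (1 + Λ^2) * (((NU⁻¹ : Aˣ) : A) * (NU : A)) := by rw [hq, mul_assoc]
    _ = 1 + Λ^2 := by rw [Units.inv_mul, mul_one]
  have keySum : Λ + ((ΛU⁻¹ : Aˣ) : A) = (NU : A) := by
    have h1 : ((ΛU⁻¹ : Aˣ) : A) * (Λ * (NU : A)) = ((ΛU⁻¹ : Aˣ) : A) * (1 + Λ^2) := by
      rw [keyN]
    have h2 : ((ΛU⁻¹ : Aˣ) : A) * Λ = 1 := by rw [← hΛU, Units.inv_mul]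
    calc Λ + ((ΛU⁻¹ : Aˣ) : A)
        = ((ΛU⁻¹ : Aˣ) : A) * Λ * Λ + ((ΛU⁻¹ : Aˣ) : A) * 1 := by rw [h2]; noncomm_ring
      _ = ((ΛU⁻¹ : Aˣ) : A) * (1 + Λ^2) := by noncomm_ring
      _ = ((ΛU⁻¹ : Aˣ) : A) * (Λ * (NU : A)) := by rw [keyN]
      _ = (((ΛU⁻¹ : Aˣ) : A) * Λ) * (NU : A) := by rw [mul_assoc]
      _ = (NU : A) := by rw [h2, one_mul]
  refine ⟨PU⁻¹ * u2, PU⁻¹ * (ΛU⁻¹ * u2), ?_, ?_⟩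
  · have expand : ((PU⁻¹ * u2 : Aˣ) : A) + ((PU⁻¹ * (ΛU⁻¹ * u2) : Aˣ) : A)
        = ((PU⁻¹ : Aˣ) : A) * ((1 + ((ΛU⁻¹ : Aˣ) : A)) * (u2 : A)) := by
      simp only [Units.val_mul]
      noncomm_ring
    rw [expand]
    have h3 : (1 + ((ΛU⁻¹ : Aˣ) : A)) * (u2 : A) = (PU : A) * S := by
      have h4 : ((ΛU⁻¹ : Aˣ) : A) * Λ = 1 := by rw [← hΛU, Units.inv_mul]
      calc (1 + ((ΛU⁻¹ : Aˣ) : A)) * (u2 : A)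
          = (1 + ((ΛU⁻¹ : Aˣ) : A)) * (1 + Λ) := by rw [hu2]
        _ = 1 + Λ + ((ΛU⁻¹ : Aˣ) : A) + ((ΛU⁻¹ : Aˣ) : A) * Λ := by noncomm_ring
        _ = 2 + (Λ + ((ΛU⁻¹ : Aˣ) : A)) := by
            rw [h4, show (2 : A) = 1 + 1 from (one_add_one_eq_two).symm]
            abel
        _ = 2 + ((NU : A)) := by rw [keySum]
        _ = P * S := by rw [hNU]; noncomm_ring
        _ = (PU : A) * S := by rw [hPU]
    rw [h3, ← mul_assoc, Units.inv_mul, one_mul]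
  · have e1 : (((PU⁻¹ * u2)⁻¹ : Aˣ) : A) = ((u2⁻¹ : Aˣ) : A) * (PU : A) := by
      rw [_root_.mul_inv_rev, inv_inv, Units.val_mul]
    have e2 : (((PU⁻¹ * (ΛU⁻¹ * u2))⁻¹ : Aˣ) : A)
        = ((u2⁻¹ : Aˣ) : A) * ((ΛU : Aˣ) : A) * (PU : A) := by
      rw [_root_.mul_inv_rev, _root_.mul_inv_rev, inv_inv, inv_inv, Units.val_mul,
        Units.val_mul, mul_assoc]
    rw [e1, e2, hΛU]
    have : ((u2⁻¹ : Aˣ) : A) * (PU : A) + ((u2⁻¹ : Aˣ) : A) * Λ * (PU : A)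
        = ((u2⁻¹ : Aˣ) : A) * (1 + Λ) * (PU : A) := by noncomm_ring
    rw [this, ← hu2, Units.inv_mul, one_mul, hPU]


end Units

section Units2
variable {A : Type*} [NormedRing A] [NormOneClass A] [CompleteSpace A] [NormedAlgebra ℂ A]
/-- scalar multiple of a near-one unit -/
lemma smul_oneSub_unit (c : ℂ) (hc : c ≠ 0) (F : A) (hF : ‖F‖ ≤ 1/2) :
    ∃ u : Aˣ, (u : A) = c • ((1 : A) - F) ∧ ‖((u⁻¹ : Aˣ) : A)‖ ≤ 2 * ‖c‖⁻¹ := by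
  obtain ⟨w, hw, hwi⟩ := unit_of_half F hF
  refine ⟨⟨c • (w : A), c⁻¹ • ((w⁻¹ : Aˣ) : A), ?_, ?_⟩, ?_, ?_⟩
  · rw [smul_mul_smul_comm, mul_inv_cancel₀ hc, Units.mul_inv, one_smul]
  · rw [smul_mul_smul_comm, inv_mul_cancel₀ hc, Units.inv_mul, one_smul]
  · show c • (w : A) = c • ((1:A) - F); rw [hw]
  · show ‖c⁻¹ • ((w⁻¹ : Aˣ) : A)‖ ≤ 2 * ‖c‖⁻¹
    rw [norm_smul, norm_inv]
    calc ‖c‖⁻¹ * ‖((w⁻¹ : Aˣ) : A)‖ ≤ ‖c‖⁻¹ * 2 := by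
          gcongr
      _ = 2 * ‖c‖⁻¹ := by ring


end Units2

section Analytic

attribute [local instance] Matrix.linftyOpNormedRing Matrix.linftyOpNormedAlgebra



set_option maxHeartbeats 2000000 in
/-- The main construction over the sum type, for m ≥ 1. -/
lemma main_block [NeZero m] (B : Matrix (Fin m ⊕ Fin m) (Fin m ⊕ Fin m) ℂ) :
    ∃ C : Fin 5 → Matrix (Fin m ⊕ Fin m) (Fin m ⊕ Fin m) ℂ,
      (∀ i, mc (C i) * C i = -1) ∧ B = ∑ i, C i := by
  haveI : CompleteSpace R := FiniteDimensional.complete ℂ _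
  -- blocks of B
  set A11 := B.toBlocks₁₁ with hA11def
  set A12 := B.toBlocks₁₂ with hA12def
  set A21 := B.toBlocks₂₁ with hA21def
  set A22 := B.toBlocks₂₂ with hA22def
  -- scalar constants
  set e₁ : ℂ := (Complex.I - 1) / 2 with he₁def
  set e₂ : ℂ := -(1 + Complex.I) / 2 with he₂def
  set η : ℂ := (1 + Complex.I) / 2 with hηdef
  have hce₁ : conj e₁ = e₂ := by
    rw [he₁def, he₂def]
    simp [map_div₀, Complex.conj_I, map_ofNat]
    ring
  have hce₂ : conj e₂ = e₁ := by
    rw [he₁def, he₂def]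
    simp [map_div₀, Complex.conj_I, map_ofNat]
    ring
  -- matrix constants
  set a₁ : R := (2⁻¹ : ℂ) • (mc A11 - A22) with ha₁def
  set a₂ : R := -((2⁻¹ : ℂ) • (A22 + mc A11)) with ha₂def
  set L₀ : R := A21 + ((1 : ℂ) + Complex.I) • 1 + a₁ * mc a₁ + Complex.I • (a₂ * mc a₂)
    with hL₀def
  set L₁ : R := e₂ • a₁ + e₁ • mc a₁ + (Complex.I * e₁) • a₂ + (Complex.I * e₂) • mc a₂
    with hL₁def
  set τ : ℝ := 1 + 8 * (‖L₀‖ + ‖L₁‖) with hτdef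
  have hτ1 : (1 : ℝ) ≤ τ := by
    have h0 : (0:ℝ) ≤ ‖L₀‖ := norm_nonneg _
    have h1 : (0:ℝ) ≤ ‖L₁‖ := norm_nonneg _
    rw [hτdef]; linarith
  have hτ0 : (0 : ℝ) < τ := lt_of_lt_of_le one_pos hτ1
  set t : ℂ := (τ : ℂ) with htdef
  have hct : conj t = t := Complex.conj_ofReal τ
  have hnt : ‖t‖ = τ := by
    rw [htdef, Complex.norm_real, Real.norm_of_nonneg hτ0.le]
  set X₁ : R := a₁ + (t * e₁) • 1 with hX₁def
  set X₂ : R := a₂ + (t * e₂) • 1 with hX₂def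
  set W : R := mc A12 - ((1 : ℂ) - Complex.I) • 1 with hWdef
  set ν : ℝ := (min 1 (1/(‖W‖ + 1))) / 100 with hνdef
  have hν0 : 0 < ν := by
    rw [hνdef]
    have : 0 < min 1 (1/(‖W‖ + 1)) := by
      apply lt_min one_pos
      positivity
    linarith
  have hν1 : ν ≤ 1/100 := by
    rw [hνdef]
    have : min 1 (1/(‖W‖ + 1)) ≤ 1 := min_le_left _ _
    linarith
  have hνW : ν * ‖W‖ ≤ 1/100 := by
    rw [hνdef]
    have h1 : min 1 (1/(‖W‖ + 1)) ≤ 1/(‖W‖ + 1) := min_le_right _ _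
    have h2 : (0:ℝ) ≤ ‖W‖ := norm_nonneg _
    have h3 : min 1 (1/(‖W‖ + 1)) / 100 * ‖W‖ ≤ 1/(‖W‖ + 1) / 100 * ‖W‖ := by
      gcongr
    refine le_trans h3 ?_
    rw [div_div, div_mul_eq_mul_div, mul_comm]
    rw [div_le_div_iff₀ (by positivity) (by norm_num)]
    nlinarith
  set n : ℂ := (ν : ℂ) with hndef
  have hcn : conj n = n := Complex.conj_ofReal ν
  have hn0 : n ≠ 0 := by
    simp only [hndef, ne_eq, Complex.ofReal_eq_zero]
    exact ne_of_gt hν0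
  have hnn : ‖n‖ = ν := by rw [hndef, Complex.norm_real, Real.norm_of_nonneg hν0.le]
  set d₃ : ℂ := (1 + Complex.I) / n with hd₃def
  set q : ℂ := t^2 * η + n * η * (1 + t^2) with hqdef
  set M₂ : R := t • L₁ + L₀ with hM₂def
  set SS : R := -(q • (1 : R) + M₂) with hSSdef
  set PP : R := mc A12 - ((1 - Complex.I) + (1 - Complex.I)/n) • 1 with hPPdef
  -- scalar norm bounds
  have hI1 : (1:ℝ) ≤ ‖(1:ℂ) + Complex.I‖ := by
    have h := Complex.abs_re_le_norm (1 + Complex.I)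
    simpa using h
  have hI2 : ‖(1:ℂ) + Complex.I‖ ≤ 2 := by
    calc ‖(1:ℂ) + Complex.I‖ ≤ ‖(1:ℂ)‖ + ‖Complex.I‖ := norm_add_le _ _
    _ ≤ 2 := by rw [norm_one, Complex.norm_I]; norm_num
  have hmI1 : (1:ℝ) ≤ ‖(1:ℂ) - Complex.I‖ := by
    have h := Complex.abs_re_le_norm (1 - Complex.I)
    simpa using h
  have hmI0 : ((1:ℂ) - Complex.I) ≠ 0 := by
    intro h
    rw [h] at hmI1
    simp at hmI1
    linarith
  have hη1 : ‖η‖ ≤ 1 := by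
    rw [hηdef, norm_div]
    rw [show ‖(2:ℂ)‖ = 2 from by norm_num]
    linarith
  have hη2 : 1/2 ≤ ‖η‖ := by
    rw [hηdef, norm_div]
    rw [show ‖(2:ℂ)‖ = 2 from by norm_num]
    linarith
  -- q lower bound
  have hqfac : q = η * ((τ^2 + ν*(1 + τ^2) : ℝ) : ℂ) := by
    rw [hqdef, htdef, hndef, hηdef]
    push_cast
    ring
  have hr0 : (0:ℝ) ≤ τ^2 + ν*(1 + τ^2) := by positivity
  have hq_lower : τ^2/2 ≤ ‖q‖ := by
    rw [hqfac, norm_mul, Complex.norm_real, Real.norm_of_nonneg hr0]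
    have h1 : τ^2 ≤ τ^2 + ν*(1 + τ^2) := by nlinarith
    have h2 := mul_le_mul hη2 h1 (by positivity) (norm_nonneg η)
    linarith
  have hτsq : (1:ℝ) ≤ τ^2 := by
    have := mul_le_mul hτ1 hτ1 zero_le_one hτ0.le
    nlinarith
  have hq0 : q ≠ 0 := by
    intro h
    rw [h, norm_zero] at hq_lower
    nlinarith
  -- the unit SU with value SS
  have hM₂norm : ‖M₂‖ ≤ τ * (‖L₀‖ + ‖L₁‖) := by
    rw [hM₂def]
    calc ‖t • L₁ + L₀‖ ≤ ‖t • L₁‖ + ‖L₀‖ := norm_add_le _ _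
    _ = τ * ‖L₁‖ + ‖L₀‖ := by rw [norm_smul, hnt]
    _ ≤ τ * (‖L₀‖ + ‖L₁‖) := by nlinarith [norm_nonneg L₀, norm_nonneg L₁]
  have hq_pos : (0:ℝ) < ‖q‖ := lt_of_lt_of_le (by nlinarith) hq_lower
  set F : R := (-(q⁻¹)) • M₂ with hFdef
  have hFnorm : ‖F‖ ≤ 1/2 := by
    rw [hFdef, norm_smul, norm_neg, norm_inv]
    rw [inv_mul_le_iff₀ hq_pos]
    have hSig : τ * (‖L₀‖ + ‖L₁‖) ≤ τ * τ / 4 := by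
      have h8 : 4 * (‖L₀‖ + ‖L₁‖) ≤ τ := by
        rw [hτdef]
        nlinarith [norm_nonneg L₀, norm_nonneg L₁]
      nlinarith
    calc ‖M₂‖ ≤ τ * (‖L₀‖ + ‖L₁‖) := hM₂norm
    _ ≤ τ * τ / 4 := hSig
    _ ≤ 1/2 * ‖q‖ := by nlinarith [hq_lower]
    _ = ‖q‖ * (1/2) := by ring
  obtain ⟨SU, hSUval, hSUinv⟩ := smul_oneSub_unit (-q) (neg_ne_zero.2 hq0) F hFnorm
  have hSUS : (SU : R) = SS := by
    rw [hSUval, hSSdef, smul_sub, hFdef, smul_smul]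
    have : (-q) * (-(q⁻¹)) = 1 := by
      field_simp
    rw [this, one_smul, neg_smul]
    abel
  have hSUinv2 : ‖((SU⁻¹ : (Matrix (Fin m) (Fin m) ℂ)ˣ) : R)‖ ≤ 4/τ^2 := by
    refine le_trans hSUinv ?_
    rw [norm_neg]
    rw [div_eq_mul_inv]
    have h2 : (τ^2)⁻¹ * 2 = 2 * (τ^2)⁻¹ := by ring
    have : ‖q‖⁻¹ ≤ 2/τ^2 := by
      rw [inv_le_iff_one_le_mul₀ hq_pos]
      rw [div_mul_eq_mul_div, le_div_iff₀ (by positivity)]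
      nlinarith
    calc 2 * ‖q‖⁻¹ ≤ 2 * (2/τ^2) := by linarith
    _ = 4 * (τ^2)⁻¹ := by ring
  -- the unit PU with value PP
  set F' : R := (n*η) • W with hF'def
  have hF'norm : ‖F'‖ ≤ 1/2 := by
    rw [hF'def, norm_smul, norm_mul, hnn]
    have hvw : (0:ℝ) ≤ ν * ‖W‖ := by positivity
    have : ν * ‖η‖ * ‖W‖ = (ν * ‖W‖) * ‖η‖ := by ring
    rw [this]
    calc (ν * ‖W‖) * ‖η‖ ≤ (ν * ‖W‖) * 1 := by gcongr
    _ = ν * ‖W‖ := by ring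
    _ ≤ 1/100 := hνW
    _ ≤ 1/2 := by norm_num
  have hc'0 : -((1 - Complex.I)/n) ≠ 0 := by
    apply neg_ne_zero.2
    exact div_ne_zero hmI0 hn0
  have h1mIη : ((1:ℂ) - Complex.I) * η = 1 := by
    rw [hηdef]
    field_simp
    linear_combination (-1:ℂ) * Complex.I_sq
  obtain ⟨PU, hPUval, hPUinv⟩ := smul_oneSub_unit (-((1 - Complex.I)/n)) hc'0 F' hF'norm
  have hPUP : (PU : R) = PP := by
    rw [hPUval, hPPdef, smul_sub, hF'def, smul_smul, hWdef]
    have hsc : -((1 - Complex.I)/n) * (n * η) = -1 := by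
      field_simp
      linear_combination (1/2:ℂ) * Complex.I_sq
    rw [hsc]
    simp only [neg_smul, one_smul, smul_sub]
    module
  have hPUinv2 : ‖((PU⁻¹ : (Matrix (Fin m) (Fin m) ℂ)ˣ) : R)‖ ≤ 2*ν := by
    refine le_trans hPUinv ?_
    rw [norm_neg, norm_div, hnn, inv_div]
    have h1 : ν / ‖(1:ℂ) - Complex.I‖ ≤ ν := div_le_self hν0.le hmI1
    linarith
  haveI : Nonempty (Fin m) := Fin.pos_iff_nonempty.mp (Nat.pos_of_ne_zero (NeZero.ne m))
  -- the unit NU with value PP * SS - 2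
  have hNfull : ((PU * SU : (Matrix (Fin m) (Fin m) ℂ)ˣ) : R) = PP * SS := by
    rw [Units.val_mul, hPUP, hSUS]
  have hNinv : ‖((((PU * SU)⁻¹ : (Matrix (Fin m) (Fin m) ℂ)ˣ)) : R)‖ ≤ 8 * ν / τ^2 := by
    rw [_root_.mul_inv_rev, Units.val_mul]
    calc ‖((SU⁻¹ : (Matrix (Fin m) (Fin m) ℂ)ˣ) : R) * ((PU⁻¹ : (Matrix (Fin m) (Fin m) ℂ)ˣ) : R)‖
        ≤ ‖((SU⁻¹ : (Matrix (Fin m) (Fin m) ℂ)ˣ) : R)‖ *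
          ‖((PU⁻¹ : (Matrix (Fin m) (Fin m) ℂ)ˣ) : R)‖ := norm_mul_le _ _
      _ ≤ (4/τ^2) * (2*ν) := by
          apply mul_le_mul hSUinv2 hPUinv2 (norm_nonneg _) (by positivity)
      _ = 8 * ν / τ^2 := by ring
  set F₂ : R := (((PU * SU)⁻¹ : (Matrix (Fin m) (Fin m) ℂ)ˣ) : R) * 2 with hF₂def
  have h2norm : ‖(2:R)‖ ≤ 2 := by
    rw [show (2:R) = 1 + 1 from one_add_one_eq_two.symm]
    calc ‖(1:R) + 1‖ ≤ ‖(1:R)‖ + ‖(1:R)‖ := norm_add_le _ _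
    _ ≤ 2 := by rw [norm_one]; norm_num
  have hF₂norm : ‖F₂‖ ≤ 1/2 := by
    rw [hF₂def]
    calc ‖(((PU * SU)⁻¹ : (Matrix (Fin m) (Fin m) ℂ)ˣ) : R) * 2‖
        ≤ ‖(((PU * SU)⁻¹ : (Matrix (Fin m) (Fin m) ℂ)ˣ) : R)‖ * ‖(2:R)‖ := norm_mul_le _ _
      _ ≤ (8 * ν / τ^2) * 2 := by
          apply mul_le_mul hNinv h2norm (norm_nonneg _) (by positivity)
      _ ≤ 16 * ν := by
          rw [div_mul_eq_mul_div]
          rw [div_le_iff₀ (by positivity)]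
          nlinarith
      _ ≤ 1/2 := by linarith
  obtain ⟨u₂, hu₂val, hu₂inv⟩ := smul_oneSub_unit (1:ℂ) one_ne_zero F₂ hF₂norm
  have hu₂inv2 : ‖((u₂⁻¹ : (Matrix (Fin m) (Fin m) ℂ)ˣ) : R)‖ ≤ 2 := by
    refine le_trans hu₂inv ?_
    rw [norm_one]
    norm_num
  set NU : (Matrix (Fin m) (Fin m) ℂ)ˣ := PU * SU * u₂ with hNUdef
  have hNUval : (NU : R) = PP * SS - 2 := by
    rw [hNUdef, Units.val_mul, hNfull, hu₂val, one_smul, mul_sub, mul_one, hF₂def,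
      ← hNfull, ← mul_assoc, Units.mul_inv, one_mul]
  have hNUinv : ‖((NU⁻¹ : (Matrix (Fin m) (Fin m) ℂ)ˣ) : R)‖ ≤ 1/3 := by
    rw [hNUdef, _root_.mul_inv_rev, Units.val_mul]
    calc ‖((u₂⁻¹ : (Matrix (Fin m) (Fin m) ℂ)ˣ) : R) *
          (((PU * SU)⁻¹ : (Matrix (Fin m) (Fin m) ℂ)ˣ) : R)‖
        ≤ ‖((u₂⁻¹ : (Matrix (Fin m) (Fin m) ℂ)ˣ) : R)‖ *
          ‖(((PU * SU)⁻¹ : (Matrix (Fin m) (Fin m) ℂ)ˣ) : R)‖ := norm_mul_le _ _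
      _ ≤ 2 * (8 * ν / τ^2) := by
          apply mul_le_mul hu₂inv2 hNinv (norm_nonneg _) (by norm_num)
      _ ≤ 16 * ν := by
          rw [mul_div_assoc]
          have : ν / τ^2 ≤ ν := div_le_self hν0.le hτsq
          nlinarith
      _ ≤ 1/3 := by linarith
  obtain ⟨G, G', hGsum, hGinv⟩ := exists_pair SS PP PU hPUP NU hNUval hNUinv
  -- expansion identities
  have hprod : ∀ (a b : R) (c c' : ℂ), (a + c • (1:R)) * (b + c' • (1:R))
      = a * b + c' • a + c • b + (c * c') • (1:R) := by
    intro a b c c'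
    simp only [mul_add, add_mul, smul_add, smul_mul_assoc, mul_smul_comm, one_mul, mul_one, smul_smul]
    module
  have hmcs : ∀ c : ℂ, mc (c • (1:R)) = (conj c) • 1 := by
    intro c
    rw [mc_smul, mc_one]
  have hmcX₁ : mc X₁ = mc a₁ + (t * e₂) • 1 := by
    rw [hX₁def, mc_add, hmcs, _root_.map_mul, hct, hce₁]
  have hmcX₂ : mc X₂ = mc a₂ + (t * e₁) • 1 := by
    rw [hX₂def, mc_add, hmcs, _root_.map_mul, hct, hce₂]
  have hsq1 : (t * e₁) * (t * e₂) = t^2 * (2⁻¹ : ℂ) := by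
    rw [he₁def, he₂def]
    linear_combination (-(t^2)/4) * Complex.I_sq
  have hsq2 : (t * e₂) * (t * e₁) = t^2 * (2⁻¹ : ℂ) := by
    rw [mul_comm (t * e₂) (t * e₁)]
    exact hsq1
  have hX1sq : X₁ * mc X₁ = a₁ * mc a₁ + (t * e₂) • a₁ + (t * e₁) • mc a₁
      + (t^2 * 2⁻¹) • 1 := by
    rw [hX₁def, hmcX₁, hprod, hsq1]
  have hX2sq : X₂ * mc X₂ = a₂ * mc a₂ + (t * e₁) • a₂ + (t * e₂) • mc a₂
      + (t^2 * 2⁻¹) • 1 := by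
    rw [hX₂def, hmcX₂, hprod, hsq2]
  have hexp : SS = -A21 - (1 + X₁ * mc X₁) - Complex.I • (1 + X₂ * mc X₂)
      - (n * η * (1 + t^2)) • 1 := by
    rw [hSSdef, hM₂def, hL₀def, hL₁def, hX1sq, hX2sq, hqdef, hηdef]
    module
  -- scalar simplifications for the element blocks
  have hs1 : (1:ℂ) / conj (1:ℂ) = 1 := by simp
  have hs1' : (conj (1:ℂ))⁻¹ = 1 := by simp
  have hs2 : Complex.I / conj Complex.I = -1 := by
    rw [Complex.conj_I, div_neg, div_self Complex.I_ne_zero]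
  have hs2' : (conj Complex.I)⁻¹ = Complex.I := by
    rw [Complex.conj_I, inv_neg, Complex.inv_I, neg_neg]
  have hIone : ((1:ℂ) + Complex.I) ≠ 0 := by
    intro h
    rw [h, norm_zero] at hI1
    linarith
  have hd₃0 : d₃ ≠ 0 := by
    rw [hd₃def]
    exact div_ne_zero hIone hn0
  have hcd₃ : conj d₃ = (1 - Complex.I) / n := by
    rw [hd₃def, map_div₀, _root_.map_add, _root_.map_one, Complex.conj_I, hcn]
    ring_nf
  have hs3 : d₃ / conj d₃ = Complex.I := by
    rw [hcd₃, hd₃def, div_div_div_cancel_right₀]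
    · rw [div_eq_iff hmI0]
      linear_combination Complex.I_sq
    · exact hn0
  have hs3' : (conj d₃)⁻¹ = n * η := by
    rw [hcd₃, hηdef, inv_div, div_eq_iff hmI0]
    linear_combination (n/2) * Complex.I_sq
  have hmct : mc ((t : ℂ) • (1:R)) = t • 1 := by rw [hmcs, hct]
  -- the matrix identities for the four blocks
  have ha12 : a₁ - a₂ = mc A11 := by rw [ha₁def, ha₂def]; module
  have hma : mc a₁ - mc a₂ = A11 := by rw [← mc_sub, ha12, mc_mc]
  have ha12' : a₁ + a₂ = -A22 := by rw [ha₁def, ha₂def]; module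
  have hmcPP : mc (↑G⁻¹ : R) + mc (↑G'⁻¹ : R) = A12 - ((1 + Complex.I)
      + (1 + Complex.I)/n) • 1 := by
    rw [← mc_add, hGinv, hPPdef, mc_sub, mc_mc]
    rw [show (((1:ℂ) - Complex.I) + (1 - Complex.I)/n) • (1:R)
        = (((1:ℂ) - Complex.I) + (1 - Complex.I)/n) • ((1:R)) from rfl]
    rw [mc_smul, mc_one]
    rw [_root_.map_add, _root_.map_sub, _root_.map_one, Complex.conj_I, map_div₀,
      _root_.map_sub, _root_.map_one, Complex.conj_I, hcn]
    ring_nf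
  -- assemble
  refine ⟨![upElt X₁ 1, upElt X₂ Complex.I, upElt ((t : ℂ) • 1) d₃,
    dgElt (↑G) (↑G⁻¹), dgElt (↑G') (↑G'⁻¹)], ?_, ?_⟩
  · intro i
    fin_cases i
    · exact skew_upElt _ _ one_ne_zero
    · exact skew_upElt _ _ Complex.I_ne_zero
    · exact skew_upElt _ _ hd₃0
    · exact skew_dgElt _ _ G.mul_inv G.inv_mul
    · exact skew_dgElt _ _ G'.mul_inv G'.inv_mul
  · rw [Fin.sum_univ_five]
    simp only [Fin.isValue, Matrix.cons_val_zero, Matrix.cons_val_one, Matrix.head_cons,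
      Matrix.cons_val_two, Matrix.tail_cons, Matrix.cons_val_three, Matrix.cons_val_four,
      Matrix.head_fin_const]
    rw [show B = fromBlocks A11 A12 A21 A22 from (fromBlocks_toBlocks B).symm]
    unfold upElt dgElt
    rw [fromBlocks_add, fromBlocks_add, fromBlocks_add, fromBlocks_add]
    rw [fromBlocks_inj]
    refine ⟨?_, ?_, ?_, ?_⟩
    · -- (1,1) block
      rw [hs1, hs2, hs3, hmct, hmcX₁, hmcX₂, ← hma, he₁def, he₂def]
      module
    · -- (1,2) block
      rw [add_assoc _ (mc (↑G⁻¹ : R)) (mc (↑G'⁻¹ : R)), hmcPP, hd₃def]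
      module
    · -- (2,1) block
      have hGG : (-((G : R))) + (-((G' : R))) = A21 + (1 + X₁ * mc X₁)
          + Complex.I • (1 + X₂ * mc X₂) + (n * η * (1 + t^2)) • 1 := by
        rw [← neg_add, hGsum, hexp]
        module
      rw [hs1', hs2', hs3', hmct, add_assoc _ (-((G : R))) (-((G' : R))), hGG]
      rw [smul_mul_smul_comm, one_mul]
      module
    · -- (2,2) block
      rw [hX₁def, hX₂def, show A22 = -(a₁ + a₂) from by rw [ha12', neg_neg],
        he₁def, he₂def]
      module


end Analytic
end SkewConAux

theorem sum_at_most_five_skew_coninvolutory (m : ℕ)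
    (A : Matrix (Fin (2 * m)) (Fin (2 * m)) ℂ) :
    ∃ k : ℕ, k ≤ 5 ∧ ∃ C : Fin k → Matrix (Fin (2 * m)) (Fin (2 * m)) ℂ,
      (∀ i, (C i).map (starRingEnd ℂ) * C i = -1) ∧ A = ∑ i, C i := by
  rcases Nat.eq_zero_or_pos m with hm | hm
  · subst hm
    refine ⟨0, by norm_num, fun i => i.elim0, fun i => i.elim0, ?_⟩
    have hA : A = 0 := by
      ext i j
      exact i.elim0
    rw [hA]
    rw [Finset.univ_eq_empty, Finset.sum_empty]
  · haveI : NeZero m := ⟨hm.ne'⟩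
    set e : Fin m ⊕ Fin m ≃ Fin (2*m) := finSumFinEquiv.trans (finCongr (two_mul m).symm)
      with hedef
    obtain ⟨D, hskew, hsum⟩ := SkewConAux.main_block (A.submatrix e e)
    refine ⟨5, le_refl 5, fun i => (D i).submatrix e.symm e.symm, ?_, ?_⟩
    · intro i
      have h1 : ((D i).submatrix (e.symm : Fin (2*m) → Fin m ⊕ Fin m) e.symm).map (starRingEnd ℂ)
          = ((D i).map (starRingEnd ℂ)).submatrix e.symm e.symm := by
        ext a b
        simp [Matrix.submatrix_apply, Matrix.map_apply]
      rw [h1]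
      have h2 := Matrix.submatrix_mul_equiv ((D i).map (starRingEnd ℂ)) (D i)
        (e.symm) (e.symm) (e.symm)
      rw [h2]
      have h3 : ((D i).map (starRingEnd ℂ)) * (D i) = -1 := hskew i
      rw [h3]
      have h4 : ((-1 : Matrix (Fin m ⊕ Fin m) (Fin m ⊕ Fin m) ℂ)).submatrix
          (e.symm : Fin (2*m) → Fin m ⊕ Fin m) e.symm = -1 := by
        ext a b
        simp [Matrix.submatrix_apply, Matrix.neg_apply, Matrix.one_apply,
          EmbeddingLike.apply_eq_iff_eq]
      rw [h4]
    · calc A = (A.submatrix (e : Fin m ⊕ Fin m → Fin (2*m)) e).submatrix e.symm e.symm := by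
            rw [Matrix.submatrix_submatrix]
            rw [Equiv.self_comp_symm, Matrix.submatrix_id_id]
        _ = (∑ i, D i).submatrix e.symm e.symm := by rw [← hsum]
        _ = ∑ i, (D i).submatrix (e.symm : Fin (2*m) → Fin m ⊕ Fin m) e.symm := by
            ext a b
            simp [Matrix.submatrix_apply, Matrix.sum_apply]
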